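/- Let $S_1, \dots, S_{n+1}$ be exchangeable real-valued random variables and let $\hat{q}$ be the $\lceil (n+1)\gamma \rceil$-th smallest value among $S_1, \dots, S_n$ (with $\hat{q} = \infty$ if $\lceil (n+1)\gamma \rceil > n$), where $\gamma \in (0,1)$. Then $\mathbb{P}(S_{n+1} \leq \hat{q}) \geq \gamma$. -/

import Mathlib

open MeasureTheory Finset

lemma conformal_lemA {n k : ℕ} (hk : 1 ≤ k) (f : Fin n → ℝ) (t : ℝ) :
    ((t : EReal) ≤ sInf {x : EReal | k ≤ (Finset.univ.filter (fun i => (f i : EReal) ≤ x)).card})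
      ↔ (Finset.univ.filter (fun i => f i < t)).card < k := by
  constructor
  · intro h
    by_contra hc
    push_neg at hc
    have hne : (Finset.univ.filter (fun i => f i < t)).Nonempty := by
      rw [← Finset.card_pos]; omega
    set x : EReal := (Finset.univ.filter (fun i => f i < t)).sup' hne (fun i => (f i : EReal))
    have hx_mem : k ≤ (Finset.univ.filter (fun i => (f i : EReal) ≤ x)).card := by
      refine le_trans hc (Finset.card_le_card ?_)
      intro i hi
      simp only [Finset.mem_filter, Finset.mem_univ, true_and] at *
      exact Finset.le_sup' (fun j => ((f j : EReal))) (by simp [hi])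
    have hxt : x < (t : EReal) := by
      rw [Finset.sup'_lt_iff]
      intro i hi
      simp only [Finset.mem_filter, Finset.mem_univ, true_and] at hi
      exact_mod_cast hi
    have : sInf {x : EReal | k ≤ (Finset.univ.filter (fun i => (f i : EReal) ≤ x)).card} ≤ x :=
      sInf_le hx_mem
    exact absurd (le_trans h this) (not_le.mpr hxt)
  · intro h
    apply le_sInf
    intro x hx
    by_contra hxt
    push_neg at hxt
    have hsub : (Finset.univ.filter (fun i => (f i : EReal) ≤ x))
        ⊆ (Finset.univ.filter (fun i => f i < t)) := by
      intro i hi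
      simp only [Finset.mem_filter, Finset.mem_univ, true_and] at *
      exact_mod_cast lt_of_le_of_lt hi hxt
    have h2 := Finset.card_le_card hsub
    simp only [Set.mem_setOf_eq] at hx
    omega

lemma conformal_card_filter_perm {N : ℕ} (σ : Equiv.Perm (Fin N)) (p : Fin N → Prop)
    [DecidablePred p] :
    (Finset.univ.filter (fun i => p (σ i))).card = (Finset.univ.filter p).card := by
  have hre : (Finset.univ.filter p)
      = (Finset.univ.filter (fun i' => p (σ i'))).image σ := by
    ext i
    simp only [Finset.mem_filter, Finset.mem_univ, true_and, Finset.mem_image]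
    constructor
    · intro h; exact ⟨σ⁻¹ i, by simpa using h, by simp⟩
    · rintro ⟨i', h, rfl⟩; exact h
  rw [hre, Finset.card_image_of_injective _ σ.injective]

lemma conformal_lemB {N k : ℕ} (hk : k ≤ N) (v : Fin N → ℝ) :
    k ≤ (Finset.univ.filter
      (fun j => (Finset.univ.filter (fun i => v i < v j)).card < k)).card := by
  set σ := Tuple.sort v with hσ
  have hmono : Monotone (v ∘ σ) := Tuple.monotone_sort v
  have hinj : Function.Injective (fun m : Fin k => σ (Fin.castLE hk m)) :=
    σ.injective.comp (Fin.castLE_injective hk)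
  calc k = (Finset.univ : Finset (Fin k)).card := by simp
    _ ≤ _ := by
        apply Finset.card_le_card_of_injOn (fun m : Fin k => σ (Fin.castLE hk m))
        · intro m _
          simp only [Finset.mem_coe, Finset.mem_filter, Finset.mem_univ, true_and]
          have hre : (Finset.univ.filter (fun i => v i < v (σ (Fin.castLE hk m)))).card
              = (Finset.univ.filter (fun i' => v (σ i') < v (σ (Fin.castLE hk m)))).card :=
            (conformal_card_filter_perm σ _).symm
          rw [hre]
          have hsub : (Finset.univ.filter (fun i' => v (σ i') < v (σ (Fin.castLE hk m))))
              ⊆ Finset.Iio (Fin.castLE hk m) := by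
            intro i' hi'
            simp only [Finset.mem_filter, Finset.mem_univ, true_and] at hi'
            simp only [Finset.mem_Iio]
            by_contra hge
            push_neg at hge
            exact absurd (hmono hge) (not_le.mpr hi')
          have := Finset.card_le_card hsub
          have hIio : (Finset.Iio (Fin.castLE hk m)).card = (m : ℕ) := by simp
          omega
        · exact fun a _ b _ h => hinj h

/-- Split conformal prediction coverage guarantee: for exchangeable scores
`S 1, …, S (n+1)`, letting `q̂` be the `⌈(n+1)γ⌉`-th smallest of the first `n` scores
(`q̂ = ∞` if `⌈(n+1)γ⌉ > n`, via `inf ∅ = ⊤` in `EReal`), we have `P(S (n+1) ≤ q̂) ≥ γ`. -/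
theorem stmt_8 {Ω : Type*} [MeasurableSpace Ω] (μ : Measure Ω) [IsProbabilityMeasure μ]
    (n : ℕ) (S : Fin (n + 1) → Ω → ℝ) (hSmeas : ∀ i, Measurable (S i))
    (hexch : ∀ σ : Equiv.Perm (Fin (n + 1)),
      Measure.map (fun ω => fun i => S (σ i) ω) μ = Measure.map (fun ω => fun i => S i ω) μ)
    (γ : ℝ) (hγ : γ ∈ Set.Ioo (0 : ℝ) 1)
    (qhat : Ω → EReal)
    (hqhat : ∀ ω, qhat ω = sInf {x : EReal |
      ⌈((n : ℝ) + 1) * γ⌉₊ ≤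
        (Finset.univ.filter (fun i : Fin n => (S i.castSucc ω : EReal) ≤ x)).card}) :
    ENNReal.ofReal γ ≤ μ {ω | (S (Fin.last n) ω : EReal) ≤ qhat ω} := by
  classical
  obtain ⟨hγ0, hγ1⟩ := hγ
  set k : ℕ := ⌈((n : ℝ) + 1) * γ⌉₊ with hkdef
  have hk1 : 1 ≤ k := by
    rw [hkdef]
    exact Nat.one_le_ceil_iff.mpr (by positivity)
  have hkn : k ≤ n + 1 := by
    rw [hkdef]
    rw [Nat.ceil_le]
    push_cast
    nlinarith
  -- measurable sets in the product space
  set B : Fin (n + 1) → Set (Fin (n + 1) → ℝ) := fun j =>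
    {v | (Finset.univ.filter (fun i => v i < v j)).card < k} with hBdef
  have hcardmeas : ∀ j : Fin (n + 1),
      Measurable (fun v : Fin (n + 1) → ℝ =>
        (Finset.univ.filter (fun i => v i < v j)).card) := by
    intro j
    have : (fun v : Fin (n + 1) → ℝ => (Finset.univ.filter (fun i => v i < v j)).card)
        = fun v => ∑ i : Fin (n + 1), if v i < v j then 1 else 0 := by
      funext v
      rw [Finset.sum_boole, Nat.cast_id]
    rw [this]
    apply Finset.measurable_sum
    intro i _
    exact Measurable.ite
      (measurableSet_lt (measurable_pi_apply i) (measurable_pi_apply j))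
      measurable_const measurable_const
  have hBmeas : ∀ j, MeasurableSet (B j) := by
    intro j
    have : B j = (fun v : Fin (n + 1) → ℝ =>
        (Finset.univ.filter (fun i => v i < v j)).card) ⁻¹' (Set.Iio k) := rfl
    rw [this]
    exact (hcardmeas j) (by trivial)
  set T : Ω → (Fin (n + 1) → ℝ) := fun ω i => S i ω with hTdef
  have hT : Measurable T := measurable_pi_lambda _ hSmeas
  set A : Fin (n + 1) → Set Ω := fun j => T ⁻¹' B j with hAdef
  have hAmeas : ∀ j, MeasurableSet (A j) := fun j => hT (hBmeas j)
  -- the event is A (last n)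
  have hE : {ω | (S (Fin.last n) ω : EReal) ≤ qhat ω} = A (Fin.last n) := by
    ext ω
    simp only [Set.mem_setOf_eq, hAdef, hBdef, Set.mem_preimage, hTdef, hqhat ω]
    rw [conformal_lemA hk1]
    -- relate counts over Fin n and Fin (n+1)
    have hcount : (Finset.univ.filter
          (fun i : Fin (n + 1) => S i ω < S (Fin.last n) ω))
        = (Finset.univ.filter
          (fun i : Fin n => S i.castSucc ω < S (Fin.last n) ω)).map Fin.castSuccEmb := by
      ext i
      simp only [Finset.mem_filter, Finset.mem_univ, true_and, Finset.mem_map,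
        Fin.castSuccEmb_apply]
      constructor
      · intro h
        have hne : i ≠ Fin.last n := by
          intro hcontra; rw [hcontra] at h; exact lt_irrefl _ h
        obtain ⟨i', rfl⟩ := Fin.exists_castSucc_eq.mpr hne
        exact ⟨i', h, rfl⟩
      · rintro ⟨i', h, rfl⟩; exact h
    rw [hcount, Finset.card_map]
  rw [hE]
  -- exchangeability: all A j have the same measure
  have hAeq : ∀ j : Fin (n + 1), μ (A j) = μ (A (Fin.last n)) := by
    intro j
    set σ : Equiv.Perm (Fin (n + 1)) := Equiv.swap (Fin.last n) j with hσdef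
    have hpre : (fun v : Fin (n + 1) → ℝ => v ∘ σ) ⁻¹' (B (Fin.last n)) = B j := by
      ext v
      simp only [Set.mem_preimage, hBdef, Set.mem_setOf_eq, Function.comp_apply]
      have hlast : σ (Fin.last n) = j := Equiv.swap_apply_left _ _
      simp only [hlast]
      rw [conformal_card_filter_perm σ (fun i => v i < v j)]
    have hmap : Measurable (fun ω => fun i => S (σ i) ω) :=
      measurable_pi_lambda _ (fun i => hSmeas (σ i))
    have h1 : μ (A j) = Measure.map (fun ω => fun i => S (σ i) ω) μ (B (Fin.last n)) := by
      rw [Measure.map_apply hmap (hBmeas (Fin.last n))]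
      congr 1
      rw [hAdef]
      simp only
      rw [← hpre]
      rfl
    rw [h1, hexch σ, Measure.map_apply hT (hBmeas (Fin.last n))]
  -- sum over j
  have hsum_eq : ∑ j : Fin (n + 1), μ (A j) = (n + 1 : ℕ) * μ (A (Fin.last n)) := by
    rw [Finset.sum_congr rfl (fun j _ => hAeq j)]
    simp [Finset.sum_const, mul_comm]
  have hsum_ge : (k : ENNReal) ≤ ∑ j : Fin (n + 1), μ (A j) := by
    have hind : ∀ j : Fin (n + 1),
        μ (A j) = ∫⁻ ω, (A j).indicator (1 : Ω → ENNReal) ω ∂μ := by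
      intro j
      rw [lintegral_indicator_one (hAmeas j)]
    calc (k : ENNReal) = ∫⁻ _, (k : ENNReal) ∂μ := by
          simp [lintegral_const]
      _ ≤ ∫⁻ ω, ∑ j : Fin (n + 1), (A j).indicator (1 : Ω → ENNReal) ω ∂μ := by
          apply lintegral_mono
          intro ω
          dsimp only
          have hptw : ∑ j : Fin (n + 1), (A j).indicator (1 : Ω → ENNReal) ω
              = ((Finset.univ.filter (fun j => ω ∈ A j)).card : ENNReal) := by
            rw [← Finset.sum_boole]
            exact Finset.sum_congr rfl (fun j _ => by
              by_cases h : ω ∈ A j <;> simp [h, Set.indicator_apply])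
          rw [hptw]
          have hfilt : (Finset.univ.filter (fun j => ω ∈ A j))
              = (Finset.univ.filter (fun j =>
                  (Finset.univ.filter (fun i => S i ω < S j ω)).card < k)) := by
            apply Finset.filter_congr
            intro j _
            simp [hAdef, hBdef, hTdef]
          rw [hfilt]
          exact_mod_cast Nat.cast_le.mpr (conformal_lemB hkn (fun i => S i ω))
      _ = ∑ j : Fin (n + 1), μ (A j) := by
          rw [lintegral_finset_sum]
          · exact Finset.sum_congr rfl (fun j _ => (hind j).symm)
          · exact fun j _ => measurable_const.indicator (hAmeas j)
  rw [hsum_eq] at hsum_ge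
  -- conclude
  have hdiv : (k : ENNReal) / ((n : ENNReal) + 1) ≤ μ (A (Fin.last n)) := by
    apply ENNReal.div_le_of_le_mul
    rw [mul_comm]
    convert hsum_ge using 2
    push_cast
    ring
  refine le_trans ?_ hdiv
  have hγk : γ ≤ (k : ℝ) / ((n : ℝ) + 1) := by
    rw [le_div_iff₀ (by positivity)]
    rw [mul_comm]
    exact Nat.le_ceil _
  calc ENNReal.ofReal γ ≤ ENNReal.ofReal ((k : ℝ) / ((n : ℝ) + 1)) :=
        ENNReal.ofReal_le_ofReal hγk
    _ = (k : ENNReal) / ((n : ENNReal) + 1) := by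
        rw [ENNReal.ofReal_div_of_pos (by positivity)]
        congr 1
        · simp
        · rw [ENNReal.ofReal_add (by positivity) (by norm_num)]
          simp
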